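/- Order does not increase under blow-up of a maximal-order center (local model): let k be a field, f ∈ k[x₁,…,xₙ] with ord₀(f) = m equal to the maximal order of the ideal. Blow up Z = (x₁ = ⋯ = x_r = 0) and consider the chart y₁ = x₁/x_r,…, y_{r−1} = x_{r−1}/x_r, y_r = x_r,…, yₙ = xₙ. Then the birational transform f̃(y) = y_r^{−m} f(y₁y_r,…,y_{r−1}y_r, y_r,…,yₙ) is a polynomial, and ord₀(f̃) ≤ m at the origin of the chart. Consequently, for an ideal I with ord_Z I = max order = m, the birational transform π_*^{−1} I satisfies max ord (π_*^{−1} I) ≤ m along the exceptional divisor. -/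

import Mathlib

open MvPolynomial

open Finsupp in
private def wIdeal (σ K : Type*) [CommSemiring K] (w : σ → ℕ) (m : ℕ) :
    Ideal (MvPolynomial σ K) where
  carrier := {f | ∀ d ∈ f.support, m ≤ weight w d}
  zero_mem' := by simp
  add_mem' := by
    classical
    intro a b ha hb d hd
    rcases Finset.mem_union.1 (MvPolynomial.support_add hd) with h | h
    exacts [ha d h, hb d h]
  smul_mem' := by
    classical
    intro c f hf d hd
    rw [smul_eq_mul] at hd
    obtain ⟨d1, h1, d2, h2, rfl⟩ := Finset.mem_add.1 (MvPolynomial.support_mul _ _ hd)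
    rw [map_add]
    exact le_add_left (hf d2 h2)

private lemma mem_wIdeal {σ K : Type*} [CommSemiring K] {w : σ → ℕ} {m : ℕ}
    {f : MvPolynomial σ K} :
    f ∈ wIdeal σ K w m ↔ ∀ d ∈ f.support, m ≤ Finsupp.weight w d := Iff.rfl

private lemma span_le_wIdeal {σ K : Type*} [Field K] {s : Set σ} {w : σ → ℕ}
    (hw : ∀ i ∈ s, w i ≠ 0) :
    Ideal.span (X '' s) ≤ wIdeal σ K w 1 := by
  rw [Ideal.span_le]
  rintro _ ⟨i, hi, rfl⟩
  intro d hd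
  rw [support_X, Finset.mem_singleton] at hd
  subst hd
  rw [Finsupp.weight_apply, Finsupp.sum_single_index (by simp)]
  simpa [Nat.one_le_iff_ne_zero] using hw i hi

private lemma pow_le_wIdeal {σ K : Type*} [Field K] {s : Set σ} {w : σ → ℕ}
    (hw : ∀ i ∈ s, w i ≠ 0) (m : ℕ) :
    (Ideal.span (X '' s)) ^ m ≤ wIdeal σ K w m := by
  classical
  induction m with
  | zero => intro f _ d _; exact Nat.zero_le _
  | succ m ih =>
    rw [pow_succ]
    refine le_trans (Ideal.mul_mono ih (span_le_wIdeal hw)) (Ideal.mul_le.2 ?_)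
    intro a ha b hb d hd
    obtain ⟨d1, h1, d2, h2, rfl⟩ := Finset.mem_add.1 (MvPolynomial.support_mul _ _ hd)
    rw [map_add]
    exact add_le_add (ha d1 h1) (hb d2 h2)

private lemma monomial_mem_pow {σ K : Type*} [Field K] (m : ℕ) :
    ∀ (d : σ →₀ ℕ) (c : K), m ≤ Finsupp.degree d →
      monomial d c ∈ (Ideal.span (Set.range (X : σ → MvPolynomial σ K))) ^ m := by
  induction m with
  | zero => intro d c _; simp
  | succ m ih =>
    intro d c hd
    have hd0 : d ≠ 0 := by
      rintro rfl; simp at hd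
    obtain ⟨i, hi⟩ : ∃ i, d i ≠ 0 := by
      by_contra h
      push_neg at h
      exact hd0 (Finsupp.ext h)
    have hle : Finsupp.single i 1 ≤ d :=
      Finsupp.single_le_iff.2 (Nat.one_le_iff_ne_zero.2 hi)
    have hdd : Finsupp.single i 1 + (d - Finsupp.single i 1) = d :=
      add_tsub_cancel_of_le hle
    have hX : monomial d c = X i * monomial (d - Finsupp.single i 1) c := by
      rw [← pow_one (X i : MvPolynomial σ K), X_pow_eq_monomial, monomial_mul, one_mul, hdd]
    have hdeg : m ≤ Finsupp.degree (d - Finsupp.single i 1) := by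
      have h2 := congrArg (Finsupp.weight (1 : σ → ℕ)) hdd
      rw [map_add] at h2
      have h1 : (Finsupp.weight (1 : σ → ℕ) (Finsupp.single i 1) : ℕ) = 1 := by
        rw [Finsupp.weight_apply, Finsupp.sum_single_index (by simp)]; simp
      rw [Finsupp.degree_eq_weight_one] at hd ⊢
      change m + 1 ≤ Finsupp.weight (1 : σ → ℕ) d at hd
      show m ≤ Finsupp.weight (1 : σ → ℕ) (d - Finsupp.single i 1)
      omega
    rw [hX, pow_succ']
    exact Ideal.mul_mem_mul (Ideal.subset_span ⟨i, rfl⟩) (ih _ _ hdeg)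

private lemma mem_pow_of_degree_ge {σ K : Type*} [Field K] {f : MvPolynomial σ K} {m : ℕ}
    (h : ∀ d ∈ f.support, m ≤ Finsupp.degree d) :
    f ∈ (Ideal.span (Set.range (X : σ → MvPolynomial σ K))) ^ m := by
  rw [f.as_sum]
  exact Submodule.sum_mem _ fun d hd => monomial_mem_pow m d _ (h d hd)


/-- Order does not increase under blow-up of a maximal-order center (local
model).  Let `f ∈ k[x₁,…,xₙ]` have order exactly `m` at the origin
(`P = (x₁,…,xₙ)`), and suppose `f ∈ Q^m` where `Q = (x₁,…,x_r)` is the ideal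
of the center `Z` (i.e. `ord_Z f ≥ m`).  In the chart
`y_j = x_j / x_r (j < r)`, `y_j = x_j (j ≥ r)`, the substituted polynomial is
divisible by `y_r^m`, and the quotient `f̃` (the birational transform) has
order `≤ m` at the origin of the chart, i.e. `f̃ ∉ P^{m+1}`. -/
theorem stmt_14 {k : Type*} [Field k] (n r m : ℕ)
    (hr1 : 1 ≤ r) (hrn : r ≤ n) (hidx : r - 1 < n)
    (f : MvPolynomial (Fin n) k) (hf0 : f ≠ 0)
    (P Q : Ideal (MvPolynomial (Fin n) k))
    (hP : P = Ideal.span (Set.range (X : Fin n → MvPolynomial (Fin n) k)))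
    (hQ : Q = Ideal.span {g | ∃ i : Fin n, (i : ℕ) < r ∧ g = X i})
    (hordm : f ∈ P ^ m) (hordm' : f ∉ P ^ (m + 1))
    (hZ : f ∈ Q ^ m) :
    ∃ g : MvPolynomial (Fin n) k,
      (aeval (fun i : Fin n => if (i : ℕ) < r - 1
          then X i * X (⟨r - 1, hidx⟩ : Fin n)
          else X i) f
        = X (⟨r - 1, hidx⟩ : Fin n) ^ m * g) ∧
      g ∉ P ^ (m + 1) := by
  classical
  set e : Fin n := ⟨r - 1, hidx⟩ with he
  have her : (e : ℕ) = r - 1 := rfl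
  set w : Fin n → ℕ := fun i => if (i : ℕ) < r - 1 then 1 else 0 with hw
  set w' : Fin n → ℕ := fun i => if (i : ℕ) < r then 1 else 0 with hw'
  set S : (Fin n →₀ ℕ) → ℕ := fun d => Finsupp.weight w d with hS
  set τ : (Fin n →₀ ℕ) → (Fin n →₀ ℕ) := fun d => d + Finsupp.single e (S d) with hτ
  set ρ : (Fin n →₀ ℕ) → (Fin n →₀ ℕ) := fun d => τ d - Finsupp.single e m with hρ
  have hwe : w e = 0 := by simp [hw, her]
  -- (1) weight w' d = S d + d e
  have hw'w : ∀ d : Fin n →₀ ℕ, Finsupp.weight w' d = S d + d e := by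
    intro d
    have hpt : ∀ i ∈ d.support, d i • w' i = d i • w i + (if e = i then d i else 0) := by
      intro i _
      rcases eq_or_ne e i with rfl | hne
      · simp [hw, hw', her]; omega
      · have hine : (i : ℕ) ≠ r - 1 := fun h => hne (Fin.ext (her.trans h.symm))
        have : ((i : ℕ) < r) ↔ ((i : ℕ) < r - 1) := by omega
        simp [hw, hw', this, hne]
    show Finsupp.weight w' d = Finsupp.weight w d + d e
    rw [Finsupp.weight_apply, Finsupp.weight_apply, Finsupp.sum, Finsupp.sum,
      Finset.sum_congr rfl hpt, Finset.sum_add_distrib, Finset.sum_ite_eq]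
    by_cases hes : e ∈ d.support
    · simp [hes]
    · simp [hes, Finsupp.notMem_support_iff.1 hes]
  -- (2) from hZ
  have hQset : {g | ∃ i : Fin n, (i : ℕ) < r ∧ g = X i}
      = (X '' {i : Fin n | (i : ℕ) < r} : Set (MvPolynomial (Fin n) k)) := by
    ext g; simp [eq_comm]
  have hZ2 : ∀ d ∈ f.support, m ≤ S d + d e := by
    intro d hd
    rw [← hw'w d]
    refine pow_le_wIdeal (s := {i : Fin n | (i : ℕ) < r}) (w := w')
      (fun i hi => by simp only [Set.mem_setOf_eq] at hi; simp [hw', hi]) m ?_ d hd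
    rwa [hQ, hQset] at hZ
  -- (3) from hordm'
  obtain ⟨a, haf, ham⟩ : ∃ a ∈ f.support, Finsupp.degree a ≤ m := by
    by_contra h
    push_neg at h
    exact hordm' (hP ▸ mem_pow_of_degree_ge (fun d hd => h d hd))
  -- (5) aeval on monomials
  set Y : Fin n → MvPolynomial (Fin n) k :=
    fun i => if (i : ℕ) < r - 1 then X i * X e else X i with hY
  have haev : ∀ (d : Fin n →₀ ℕ) (c : k), aeval Y (monomial d c) = monomial (τ d) c := by
    intro d c
    rw [aeval_monomial]
    have hprod : (d.prod fun i k' => (Y i) ^ k')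
        = (monomial d 1 : MvPolynomial (Fin n) k) * X e ^ (S d) := by
      rw [Finsupp.prod]
      have h1 : ∀ i ∈ d.support, (Y i) ^ (d i) = X i ^ (d i) * X e ^ (d i • w i) := by
        intro i _
        by_cases hi : (i : ℕ) < r - 1
        · simp [hY, hw, hi, mul_pow]
        · simp [hY, hw, hi]
      rw [Finset.prod_congr rfl h1, Finset.prod_mul_distrib, Finset.prod_pow_eq_pow_sum,
        prod_X_pow_eq_monomial]
      congr 1
    rw [hprod, X_pow_eq_monomial, monomial_mul, mul_one, algebraMap_eq, C_mul_monomial, mul_one]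
  have hfs : aeval Y f = ∑ d ∈ f.support, monomial (τ d) (coeff d f) := by
    conv_lhs => rw [f.as_sum]
    rw [map_sum]
    exact Finset.sum_congr rfl fun d _ => haev d _
  have hτe : ∀ d : Fin n →₀ ℕ, τ d e = d e + S d := by
    intro d; simp [hτ, Finsupp.single_eq_same]
  have hkey : ∀ d ∈ f.support, Finsupp.single e m + ρ d = τ d := by
    intro d hd
    rw [hρ]
    exact add_tsub_cancel_of_le (Finsupp.single_le_iff.2 (by rw [hτe]; have := hZ2 d hd; omega))
  refine ⟨∑ d ∈ f.support, monomial (ρ d) (coeff d f), ?_, ?_⟩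
  · rw [hfs, Finset.mul_sum]
    refine Finset.sum_congr rfl fun d hd => ?_
    rw [X_pow_eq_monomial, monomial_mul, one_mul, hkey d hd]
  -- injectivity of ρ on support
  have hSerase : ∀ dd : Fin n →₀ ℕ, S dd = S (Finsupp.erase e dd) := by
    intro dd
    show Finsupp.weight w dd = Finsupp.weight w (Finsupp.erase e dd)
    conv_lhs => rw [← Finsupp.erase_add_single e dd]
    rw [map_add]
    have : Finsupp.weight w (Finsupp.single e (dd e)) = 0 := by
      rw [Finsupp.weight_apply, Finsupp.sum_single_index (by simp)]
      simp [hwe]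
    simp [this]
  have hρoff : ∀ (dd : Fin n →₀ ℕ) (i : Fin n), i ≠ e → ρ dd i = dd i := by
    intro dd i hi
    simp [hρ, hτ, Finsupp.tsub_apply, Finsupp.single_apply, Ne.symm hi]
  have hρe : ∀ dd : Fin n →₀ ℕ, ρ dd e = dd e + S dd - m := by
    intro dd
    simp [hρ, Finsupp.tsub_apply, hτe, Finsupp.single_eq_same]
  have hinj : ∀ d ∈ f.support, ∀ d' ∈ f.support, ρ d = ρ d' → d = d' := by
    intro d hd d' hd' hρeq
    have hoff : ∀ i, i ≠ e → d i = d' i := by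
      intro i hi
      have := DFunLike.congr_fun hρeq i
      rwa [hρoff d i hi, hρoff d' i hi] at this
    have hSe : S d = S d' := by
      rw [hSerase d, hSerase d']
      congr 1
      ext i
      rcases eq_or_ne i e with rfl | hi
      · simp
      · simp [Finsupp.erase_ne hi, hoff i hi]
    have h3 := DFunLike.congr_fun hρeq e
    rw [hρe d, hρe d'] at h3
    have hde := hZ2 d hd
    have hde' := hZ2 d' hd'
    ext i
    rcases eq_or_ne i e with rfl | hi
    · omega
    · exact hoff i hi
  have hcoeff : coeff (ρ a) (∑ d ∈ f.support, monomial (ρ d) (coeff d f)) = coeff a f := by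
    rw [coeff_sum, Finset.sum_eq_single a]
    · rw [coeff_monomial, if_pos rfl]
    · intro b hb hba
      rw [coeff_monomial, if_neg (fun h => hba (hinj b hb a haf h))]
    · intro h; exact absurd haf h
  -- degree bound on ρ a
  have hdeg : Finsupp.degree (ρ a) ≤ m := by
    have h6 := congrArg (Finsupp.weight (1 : Fin n → ℕ)) (hkey a haf)
    rw [map_add] at h6
    have hsm : ∀ (j : Fin n) (q : ℕ),
        Finsupp.weight (1 : Fin n → ℕ) (Finsupp.single j q) = q := by
      intro j q
      rw [Finsupp.weight_apply, Finsupp.sum_single_index (by simp)]; simp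
    have hτdeg : Finsupp.weight (1 : Fin n → ℕ) (τ a)
        = Finsupp.weight (1 : Fin n → ℕ) a + S a := by
      rw [hτ, map_add, hsm]
    have hw'le : Finsupp.weight w' a ≤ Finsupp.weight (1 : Fin n → ℕ) a := by
      rw [Finsupp.weight_apply, Finsupp.weight_apply, Finsupp.sum, Finsupp.sum]
      refine Finset.sum_le_sum fun i _ => ?_
      have : w' i ≤ 1 := by simp [hw']; split <;> simp
      simpa [smul_eq_mul] using Nat.mul_le_mul_left (a i) this
    have h7 := hZ2 a haf
    have h8 := hw'w a
    rw [Finsupp.degree_eq_weight_one] at ham ⊢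
    change Finsupp.weight (1 : Fin n → ℕ) a ≤ m at ham
    show Finsupp.weight (1 : Fin n → ℕ) (ρ a) ≤ m
    rw [hsm] at h6
    omega
  intro hg
  have hmem : ∀ d ∈ (∑ d ∈ f.support, monomial (ρ d) (coeff d f)).support,
      m + 1 ≤ Finsupp.weight (1 : Fin n → ℕ) d := by
    refine pow_le_wIdeal (s := (Set.univ : Set (Fin n))) (w := (1 : Fin n → ℕ))
      (by simp) (m + 1) ?_
    rwa [hP, ← Set.image_univ] at hg
  have hρa : ρ a ∈ (∑ d ∈ f.support, monomial (ρ d) (coeff d f)).support := by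
    rw [mem_support_iff, hcoeff]
    exact mem_support_iff.1 haf
  have := hmem _ hρa
  rw [Finsupp.degree_eq_weight_one] at hdeg
  change Finsupp.weight (1 : Fin n → ℕ) (ρ a) ≤ m at hdeg
  omega
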